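/- Fix $\lambda_0 < 0 < \lambda_1$, $\mu > 0$. For $y > 0$ let $\theta^*(y) \in (0,1)$ be the unique solution of $\frac{e^{\lambda_1 y}}{\lambda_1-\lambda_0} = \int_0^\infty \frac{e^{\lambda_1 s}}{(e^{\lambda_1 s}-\theta)^2} e^{\lambda_0 s} ds$. Then the map $y \mapsto \mu\int_0^\infty \frac{e^{\lambda_1 s}}{e^{\lambda_1 s} - \theta^*(y)} e^{\lambda_0 s}\, ds$ is strictly increasing on $(0,\infty)$, and for every $y > 0$, $\mu\int_0^\infty \frac{e^{\lambda_1 s}}{e^{\lambda_1 s} - \theta^*(y)} e^{\lambda_0 s}\, ds > -\frac{\mu}{\lambda_0}$. -/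

import Mathlib

open Real MeasureTheory Set

section aux
variable {lam0 lam1 : ℝ}

lemma den_pos (hlam1 : 0 < lam1) {θ s : ℝ} (hθ0 : 0 ≤ θ) (hθ1 : θ < 1) (hs : 0 < s) :
    (1 - θ) * Real.exp (lam1 * s) ≤ Real.exp (lam1 * s) - θ := by
  have h1 : (1:ℝ) ≤ Real.exp (lam1 * s) := Real.one_le_exp (by positivity)
  nlinarith

lemma integrable_pow (hlam0 : lam0 < 0) (hlam1 : 0 < lam1) {θ : ℝ} (hθ0 : 0 ≤ θ) (hθ1 : θ < 1)
    (n : ℕ) (hn : 1 ≤ n) :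
    IntegrableOn (fun s => Real.exp (lam1 * s) / (Real.exp (lam1 * s) - θ) ^ n *
      Real.exp (lam0 * s)) (Set.Ioi 0) := by
  have hexp : IntegrableOn (fun s : ℝ => ((1 - θ) ^ n)⁻¹ * Real.exp (lam0 * s)) (Set.Ioi 0) := by
    have := (exp_neg_integrableOn_Ioi 0 (b := -lam0) (by linarith)).const_mul ((1 - θ) ^ n)⁻¹
    simp at this; exact this
  apply Integrable.mono hexp
  · apply ContinuousOn.aestronglyMeasurable _ measurableSet_Ioi
    apply ContinuousOn.mul _ (Continuous.continuousOn (by continuity))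
    apply ContinuousOn.div (Continuous.continuousOn (by continuity))
      (Continuous.continuousOn (by continuity))
    intro s hs
    have h := den_pos hlam1 hθ0 hθ1 hs
    have h2 : 0 < Real.exp (lam1 * s) - θ := by nlinarith [Real.exp_pos (lam1 * s)]
    exact pow_ne_zero n h2.ne'
  · filter_upwards [ae_restrict_mem measurableSet_Ioi] with s hs
    have hs0 : (0:ℝ) < s := hs
    have h1θ : (0:ℝ) < 1 - θ := by linarith
    have h1 : (1:ℝ) ≤ Real.exp (lam1 * s) := Real.one_le_exp (by positivity)
    have hden : (1 - θ) * Real.exp (lam1 * s) ≤ Real.exp (lam1 * s) - θ :=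
      den_pos hlam1 hθ0 hθ1 hs
    have hdpos : 0 < Real.exp (lam1 * s) - θ := by nlinarith [Real.exp_pos (lam1 * s)]
    have h2 : (1 - θ) ^ n * Real.exp (lam1 * s) ≤ (Real.exp (lam1 * s) - θ) ^ n := by
      calc (1 - θ) ^ n * Real.exp (lam1 * s)
          ≤ (1 - θ) ^ n * Real.exp (lam1 * s) ^ n := by
            apply mul_le_mul_of_nonneg_left _ (pow_nonneg h1θ.le n)
            calc Real.exp (lam1 * s) = Real.exp (lam1 * s) ^ 1 := (pow_one _).symm
            _ ≤ Real.exp (lam1 * s) ^ n := pow_le_pow_right₀ h1 hn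
        _ = ((1 - θ) * Real.exp (lam1 * s)) ^ n := (mul_pow _ _ _).symm
        _ ≤ (Real.exp (lam1 * s) - θ) ^ n := pow_le_pow_left₀ (mul_nonneg h1θ.le (Real.exp_nonneg _)) hden n
    have key : Real.exp (lam1 * s) / (Real.exp (lam1 * s) - θ) ^ n ≤ ((1 - θ) ^ n)⁻¹ := by
      rw [div_le_iff₀ (pow_pos hdpos n)]
      calc Real.exp (lam1 * s)
          = ((1 - θ) ^ n)⁻¹ * ((1 - θ) ^ n * Real.exp (lam1 * s)) := by
            have hne : ((1:ℝ) - θ) ^ n ≠ 0 := pow_ne_zero n h1θ.ne'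
            field_simp
        _ ≤ ((1 - θ) ^ n)⁻¹ * (Real.exp (lam1 * s) - θ) ^ n :=
            mul_le_mul_of_nonneg_left h2 (inv_nonneg.2 (pow_nonneg h1θ.le n))
    rw [Real.norm_eq_abs, Real.norm_eq_abs,
      abs_of_nonneg (mul_nonneg (div_nonneg (Real.exp_nonneg _) (pow_nonneg hdpos.le n))
        (Real.exp_nonneg _)),
      abs_of_nonneg (mul_nonneg (inv_nonneg.2 (pow_nonneg h1θ.le n)) (Real.exp_nonneg _))]
    exact mul_le_mul_of_nonneg_right key (Real.exp_nonneg _)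

lemma integral_strict_mono (hlam0 : lam0 < 0) (hlam1 : 0 < lam1) {θ1 θ2 : ℝ}
    (hθ0 : 0 ≤ θ1) (h12 : θ1 < θ2) (hθ1 : θ2 < 1) (n : ℕ) (hn : 1 ≤ n) :
    (∫ s in Set.Ioi (0:ℝ), Real.exp (lam1 * s) / (Real.exp (lam1 * s) - θ1) ^ n *
        Real.exp (lam0 * s)) <
      ∫ s in Set.Ioi (0:ℝ), Real.exp (lam1 * s) / (Real.exp (lam1 * s) - θ2) ^ n *
        Real.exp (lam0 * s) := by
  have hi1 := integrable_pow hlam0 hlam1 hθ0 (h12.trans hθ1) n hn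
  have hi2 := integrable_pow hlam0 hlam1 (hθ0.trans h12.le) hθ1 n hn
  rw [← sub_pos, ← integral_sub hi2 hi1]
  have hpt : ∀ s ∈ Set.Ioi (0:ℝ),
      0 < Real.exp (lam1 * s) / (Real.exp (lam1 * s) - θ2) ^ n * Real.exp (lam0 * s) -
        Real.exp (lam1 * s) / (Real.exp (lam1 * s) - θ1) ^ n * Real.exp (lam0 * s) := by
    intro s hs
    have hd2 : 0 < Real.exp (lam1 * s) - θ2 := by
      have := den_pos hlam1 (hθ0.trans h12.le) hθ1 hs
      nlinarith [Real.exp_pos (lam1 * s)]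
    have hd1 : 0 < Real.exp (lam1 * s) - θ1 := by linarith
    have hlt : Real.exp (lam1 * s) / (Real.exp (lam1 * s) - θ1) ^ n <
        Real.exp (lam1 * s) / (Real.exp (lam1 * s) - θ2) ^ n := by
      apply div_lt_div_of_pos_left (Real.exp_pos _) (pow_pos hd2 n)
      exact pow_lt_pow_left₀ (by linarith) hd2.le (by omega)
    have := mul_lt_mul_of_pos_right hlt (Real.exp_pos (lam0 * s))
    linarith
  have hI : IntegrableOn (fun s => Real.exp (lam1 * s) / (Real.exp (lam1 * s) - θ2) ^ n *
      Real.exp (lam0 * s) - Real.exp (lam1 * s) / (Real.exp (lam1 * s) - θ1) ^ n *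
      Real.exp (lam0 * s)) (Set.Ioi 0) := hi2.sub hi1
  rw [setIntegral_pos_iff_support_of_nonneg_ae _ hI]
  · have hsub : Set.Ioi (0:ℝ) ⊆ Function.support _ ∩ Set.Ioi 0 := fun s hs =>
      ⟨fun h => absurd h (ne_of_gt (hpt s hs)), hs⟩
    calc (0:ENNReal) < volume (Set.Ioi (0:ℝ)) := by simp
      _ ≤ _ := measure_mono hsub
  · filter_upwards [ae_restrict_mem measurableSet_Ioi] with s hs
    exact (hpt s hs).le

lemma integral_mono_aux (hlam0 : lam0 < 0) (hlam1 : 0 < lam1) {θ1 θ2 : ℝ}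
    (hθ0 : 0 ≤ θ1) (h12 : θ1 < θ2) (hθ1 : θ2 < 1) :
    (∫ s in Set.Ioi (0:ℝ), Real.exp (lam1 * s) / (Real.exp (lam1 * s) - θ1) *
        Real.exp (lam0 * s)) <
      ∫ s in Set.Ioi (0:ℝ), Real.exp (lam1 * s) / (Real.exp (lam1 * s) - θ2) *
        Real.exp (lam0 * s) := by
  have := integral_strict_mono hlam0 hlam1 hθ0 h12 hθ1 1 le_rfl
  simpa using this

end aux

theorem stmt_7 (lam0 lam1 mu : ℝ) (hlam0 : lam0 < 0) (hlam1 : 0 < lam1) (hmu : 0 < mu)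
    (thetaStar : ℝ → ℝ)
    (hth : ∀ y : ℝ, 0 < y → thetaStar y ∈ Set.Ioo (0:ℝ) 1 ∧
      Real.exp (lam1 * y) / (lam1 - lam0) =
        ∫ s in Set.Ioi (0:ℝ),
          Real.exp (lam1 * s) / (Real.exp (lam1 * s) - thetaStar y) ^ 2 *
            Real.exp (lam0 * s)) :
    StrictMonoOn (fun y : ℝ =>
        mu * ∫ s in Set.Ioi (0:ℝ),
          Real.exp (lam1 * s) / (Real.exp (lam1 * s) - thetaStar y) * Real.exp (lam0 * s))
      (Set.Ioi 0) ∧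
    ∀ y : ℝ, 0 < y →
      -(mu / lam0) <
        mu * ∫ s in Set.Ioi (0:ℝ),
          Real.exp (lam1 * s) / (Real.exp (lam1 * s) - thetaStar y) * Real.exp (lam0 * s) := by
  constructor
  · intro y1 hy1 y2 hy2 h12
    obtain ⟨⟨h10, h11⟩, he1⟩ := hth y1 hy1
    obtain ⟨⟨h20, h21⟩, he2⟩ := hth y2 hy2
    have hlt : thetaStar y1 < thetaStar y2 := by
      by_contra h
      push_neg at h
      have hle : (∫ s in Set.Ioi (0:ℝ), Real.exp (lam1 * s) /
          (Real.exp (lam1 * s) - thetaStar y2) ^ 2 * Real.exp (lam0 * s)) ≤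
          ∫ s in Set.Ioi (0:ℝ), Real.exp (lam1 * s) /
          (Real.exp (lam1 * s) - thetaStar y1) ^ 2 * Real.exp (lam0 * s) := by
        rcases eq_or_lt_of_le h with heq | hlt'
        · rw [heq]
        · exact (integral_strict_mono hlam0 hlam1 h20.le hlt' h11 2 one_le_two).le
      rw [← he1, ← he2] at hle
      have hy12 : Real.exp (lam1 * y1) < Real.exp (lam1 * y2) :=
        Real.exp_lt_exp.2 (by nlinarith)
      have hd : (0:ℝ) < lam1 - lam0 := by linarith
      have := (div_le_div_iff₀ hd hd).1 hle
      nlinarith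
    exact mul_lt_mul_of_pos_left (integral_mono_aux hlam0 hlam1 h10.le hlt h21) hmu
  · intro y hy
    obtain ⟨⟨h0, h1⟩, _⟩ := hth y hy
    have hkey := integral_mono_aux hlam0 hlam1 (le_refl (0:ℝ)) h0 h1
    have hint : (∫ s in Set.Ioi (0:ℝ), Real.exp (lam1 * s) / (Real.exp (lam1 * s) - 0) *
        Real.exp (lam0 * s)) = -lam0⁻¹ := by
      have heq : ∀ s : ℝ, Real.exp (lam1 * s) / (Real.exp (lam1 * s) - 0) * Real.exp (lam0 * s)
          = (fun x => Real.exp (-x)) (-lam0 * s) := by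
        intro s
        simp only [sub_zero, div_self (Real.exp_ne_zero _), one_mul]
        ring_nf
      rw [show (fun s => Real.exp (lam1 * s) / (Real.exp (lam1 * s) - 0) * Real.exp (lam0 * s))
          = fun s => (fun x => Real.exp (-x)) (-lam0 * s) from funext heq] at *
      rw [MeasureTheory.integral_comp_mul_left_Ioi (fun x => Real.exp (-x)) 0
        (by linarith : (0:ℝ) < -lam0)]
      simp [integral_exp_neg_Ioi, inv_neg, integral_exp_Iic_zero]
    rw [hint] at hkey
    have : -(mu / lam0) = mu * -lam0⁻¹ := by field_simp
    rw [this]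
    exact mul_lt_mul_of_pos_left hkey hmu
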